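/- For every even integer d ≥ 4, the set U_d^even = (⋃_{k=0}^{(d−4)/2} C^{(d,d−2k)}) ∪ A^{(d,0)} ∪ {S_d} is an unextendible product basis in ℂ^(Fin d × Fin d × Fin d): if u, v, w ∈ ℂ^d are such that the product vector u ⊗ v ⊗ w is orthogonal to every member of U_d^even, then u ⊗ v ⊗ w = 0 (equivalently, u = 0 or v = 0 or w = 0). -/

import Mathlib

open scoped ComplexOrder

noncomputable section

/-- the standard basis vector e_a of ℂ^d (indexed by a natural number `a`;
it is the zero vector when `a ≥ d`). -/
def eV (d : ℕ) (a : ℕ) : Fin d → ℂ := fun k => if (k : ℕ) = a then 1 else 0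

/-- ω_m = exp(2πi/m) -/
def wN (m : ℕ) : ℂ := Complex.exp (2 * Real.pi * Complex.I / m)

/-- η_i^{(d−2k)} = Σ_{t=k}^{d−2−k} ω_{d−1−2k}^{i(t−k)} e_t -/
def etaG (d k i : ℕ) : Fin d → ℂ :=
  fun a => ∑ t ∈ Finset.Icc k (d - 2 - k), wN (d - 1 - 2 * k) ^ (i * (t - k)) * eV d t a

/-- ξ_j^{(d−2k)} = Σ_{t=k}^{d−2−k} ω_{d−1−2k}^{j(t−k)} e_{t+1} -/
def xiG (d k j : ℕ) : Fin d → ℂ :=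
  fun a => ∑ t ∈ Finset.Icc k (d - 2 - k), wN (d - 1 - 2 * k) ^ (j * (t - k)) * eV d (t + 1) a

/-- the product vector u ⊗ v ⊗ w -/
def tpv (d : ℕ) (u v w : Fin d → ℂ) : Fin d × Fin d × Fin d → ℂ :=
  fun p => u p.1 * v p.2.1 * w p.2.2

/-- the stopper state S_d = (Σ e_i) ⊗ (Σ e_j) ⊗ (Σ e_k) -/
def stopD (d : ℕ) : Fin d × Fin d × Fin d → ℂ :=
  tpv d (fun a => ∑ i ∈ Finset.range d, eV d i a)
    (fun a => ∑ i ∈ Finset.range d, eV d i a)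
    (fun a => ∑ i ∈ Finset.range d, eV d i a)

/-- the set C^{(d,d−2k)}, the union of the six families A₁, A₂, A₃, B₁, B₂, B₃
indexed by (i,j) ∈ ℤ_{d−1−2k} × ℤ_{d−1−2k} \ {(0,0)} -/
def Cset (d k : ℕ) : Set (Fin d × Fin d × Fin d → ℂ) :=
  {x | ∃ i j : ℕ, i < d - 1 - 2 * k ∧ j < d - 1 - 2 * k ∧ ¬(i = 0 ∧ j = 0) ∧
      (x = tpv d (xiG d k j) (eV d k) (etaG d k i) ∨
       x = tpv d (xiG d k j) (etaG d k i) (eV d (d - 1 - k)) ∨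
       x = tpv d (eV d (d - 1 - k)) (xiG d k j) (etaG d k i) ∨
       x = tpv d (etaG d k i) (eV d (d - 1 - k)) (xiG d k j) ∨
       x = tpv d (etaG d k i) (xiG d k j) (eV d k) ∨
       x = tpv d (eV d k) (etaG d k i) (xiG d k j))}

/-- with φ_i = e_{(d−2)/2} + (−1)^i e_{d/2}, the set
A^{(d,0)} = { φ_r ⊗ φ_s ⊗ φ_t : (r,s,t) ≠ (0,0,0) } (for even d) -/
def phiE (d i : ℕ) : Fin d → ℂ :=
  fun a => eV d ((d - 2) / 2) a + (-1 : ℂ) ^ i * eV d (d / 2) a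

def A0set (d : ℕ) : Set (Fin d × Fin d × Fin d → ℂ) :=
  {x | ∃ r s t : ℕ, r < 2 ∧ s < 2 ∧ t < 2 ∧ ¬(r = 0 ∧ s = 0 ∧ t = 0) ∧
      x = tpv d (phiE d r) (phiE d s) (phiE d t)}

/-- U_d^odd = (⋃_{k=0}^{(d−3)/2} C^{(d,d−2k)}) ∪ {S_d} -/
def Uodd (d : ℕ) : Set (Fin d × Fin d × Fin d → ℂ) :=
  {x | ∃ k ≤ (d - 3) / 2, x ∈ Cset d k} ∪ {stopD d}

/-- U_d^even = (⋃_{k=0}^{(d−4)/2} C^{(d,d−2k)}) ∪ A^{(d,0)} ∪ {S_d} -/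
def Ueven (d : ℕ) : Set (Fin d × Fin d × Fin d → ℂ) :=
  {x | ∃ k ≤ (d - 4) / 2, x ∈ Cset d k} ∪ A0set d ∪ {stopD d}

/-- the standard Hermitian inner product on ℂ^(Fin d × Fin d × Fin d) -/
def inpD (d : ℕ) (x y : Fin d × Fin d × Fin d → ℂ) : ℂ :=
  ∑ p, (starRingEnd ℂ) (x p) * y p

/-- Ẽ = I_d ⊗ E acting on ℂ^(Fin d × Fin d × Fin d) -/
def ampBCD (d : ℕ) (E : Matrix (Fin d × Fin d) (Fin d × Fin d) ℂ) :
    Matrix (Fin d × Fin d × Fin d) (Fin d × Fin d × Fin d) ℂ :=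
  fun p q => (if p.1 = q.1 then (1 : ℂ) else 0) * E p.2 q.2


lemma orswap {p q r s t : Prop} (h : p ∨ q ∨ r ∨ (s ∧ t)) : p ∨ r ∨ q ∨ (t ∧ s) := by tauto
open Finset

/-- DFT inversion -/
lemma upbF_inv (m : ℕ) (hm : 0 < m) (ζ : ℂ) (hζ : IsPrimitiveRoot ζ m)
    (y : ℕ → ℂ) (s : ℕ) (hs : s < m) :
    (m : ℂ) * y s = ∑ i ∈ range m, ζ⁻¹ ^ (i * s) * ∑ t ∈ range m, ζ ^ (i * t) * y t := by
  have hζ0 : ζ ≠ 0 := hζ.ne_zero hm.ne'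
  have key : ∀ t ∈ range m,
      (∑ i ∈ range m, ζ⁻¹ ^ (i * s) * ζ ^ (i * t)) * y t
        = (if t = s then (m : ℂ) else 0) * y t := by
    intro t ht
    rw [mem_range] at ht
    congr 1
    have hrw : ∀ i : ℕ, ζ⁻¹ ^ (i * s) * ζ ^ (i * t) = (ζ⁻¹ ^ s * ζ ^ t) ^ i := by
      intro i
      rw [mul_pow, ← pow_mul, ← pow_mul, mul_comm s i, mul_comm t i]
    rw [Finset.sum_congr rfl fun i _ => hrw i]
    by_cases hts : t = s
    · subst hts
      rw [if_pos rfl]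
      have h1 : ζ⁻¹ ^ t * ζ ^ t = 1 := by
        rw [inv_pow, inv_mul_cancel₀ (pow_ne_zero _ hζ0)]
      have h2 : ∀ i ∈ range m, (ζ⁻¹ ^ t * ζ ^ t) ^ i = (1 : ℂ) := fun i _ => by
        rw [h1, one_pow]
      rw [Finset.sum_congr rfl h2, Finset.sum_const, card_range, nsmul_eq_mul, mul_one]
    · rw [if_neg hts]
      have hne1 : ζ⁻¹ ^ s * ζ ^ t ≠ 1 := by
        intro h1
        refine hts (hζ.pow_inj ht hs ?_)
        rw [inv_pow, inv_mul_eq_one₀ (pow_ne_zero _ hζ0)] at h1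
        exact h1.symm
      have hpow : (ζ⁻¹ ^ s * ζ ^ t) ^ m = 1 := by
        rw [mul_pow, ← pow_mul, ← pow_mul, mul_comm s m, mul_comm t m,
          pow_mul, pow_mul, hζ.pow_eq_one, inv_pow, hζ.pow_eq_one]
        simp
      rw [geom_sum_eq hne1, hpow, sub_self, zero_div]
  calc (m : ℂ) * y s
      = ∑ t ∈ range m, (if t = s then (m : ℂ) else 0) * y t := by
        rw [Finset.sum_eq_single s]
        · rw [if_pos rfl]
        · intro b _ hb; rw [if_neg hb, zero_mul]
        · intro hnot; exact absurd (mem_range.mpr hs) hnot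
    _ = ∑ t ∈ range m, (∑ i ∈ range m, ζ⁻¹ ^ (i * s) * ζ ^ (i * t)) * y t :=
        (Finset.sum_congr rfl key).symm
    _ = ∑ t ∈ range m, ∑ i ∈ range m, ζ⁻¹ ^ (i * s) * (ζ ^ (i * t) * y t) := by
        refine Finset.sum_congr rfl fun t _ => ?_
        rw [Finset.sum_mul]
        exact Finset.sum_congr rfl fun i _ => by ring
    _ = ∑ i ∈ range m, ∑ t ∈ range m, ζ⁻¹ ^ (i * s) * (ζ ^ (i * t) * y t) := Finset.sum_comm
    _ = ∑ i ∈ range m, ζ⁻¹ ^ (i * s) * ∑ t ∈ range m, ζ ^ (i * t) * y t := by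
        exact Finset.sum_congr rfl fun i _ => by rw [Finset.mul_sum]
lemma upbF_zero (m : ℕ) (hm : 0 < m) (ζ : ℂ) (hζ : IsPrimitiveRoot ζ m)
    (y : ℕ → ℂ) (hF : ∀ i, i < m → ∑ t ∈ range m, ζ ^ (i * t) * y t = 0) :
    ∀ s, s < m → y s = 0 := by
  intro s hs
  have h := upbF_inv m hm ζ hζ y s hs
  have hz : ∑ i ∈ range m, ζ⁻¹ ^ (i * s) * ∑ t ∈ range m, ζ ^ (i * t) * y t = 0 := by
    refine Finset.sum_eq_zero fun i hi => ?_
    rw [hF i (mem_range.mp hi), mul_zero]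
  rw [hz] at h
  have hm' : (m : ℂ) ≠ 0 := Nat.cast_ne_zero.mpr hm.ne'
  exact (mul_eq_zero.mp h).resolve_left hm'

lemma upbF_const (m : ℕ) (hm : 0 < m) (ζ : ℂ) (hζ : IsPrimitiveRoot ζ m)
    (y : ℕ → ℂ) (hF : ∀ i, i < m → i ≠ 0 → ∑ t ∈ range m, ζ ^ (i * t) * y t = 0) :
    ∀ s, s < m → y s = y 0 := by
  have key : ∀ s, s < m →
      (m : ℂ) * y s = ∑ t ∈ range m, ζ ^ (0 * t) * y t := by
    intro s hs
    rw [upbF_inv m hm ζ hζ y s hs]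
    rw [Finset.sum_eq_single 0]
    · rw [zero_mul, pow_zero, one_mul]
    · intro i hi hi0
      rw [hF i (mem_range.mp hi) hi0, mul_zero]
    · intro h0; exact absurd (mem_range.mpr hm) h0
  intro s hs
  have h1 := key s hs
  have h2 := key 0 hm
  have hm' : (m : ℂ) ≠ 0 := Nat.cast_ne_zero.mpr hm.ne'
  have : (m : ℂ) * y s = (m : ℂ) * y 0 := by rw [h1, h2]
  exact mul_left_cancel₀ hm' this


def pZe (m : ℕ) (y : ℕ → ℂ) : Prop := ∀ s, s < m → y s = 0
def pCe (m : ℕ) (y : ℕ → ℂ) : Prop := ∀ s, s < m → y s = y 0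
def pZx (m : ℕ) (y : ℕ → ℂ) : Prop := ∀ s, s < m → y (s + 1) = 0
def pCx (m : ℕ) (y : ℕ → ℂ) : Prop := ∀ s, s < m → y (s + 1) = y 1
def wS (m : ℕ) (y : ℕ → ℂ) : ℂ := ∑ s ∈ range (m + 1), y s

variable {m : ℕ} {y : ℕ → ℂ}

lemma gPe (hm : 3 ≤ m) (hne : ∃ s, s ≤ m ∧ y s ≠ 0) (h : pZe m y) :
    y 0 = 0 ∧ y m ≠ 0 ∧ ¬pCx m y ∧ wS m y ≠ 0 := by
  have h0 : y 0 = 0 := h 0 (by omega)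
  have hym : y m ≠ 0 := by
    obtain ⟨s, hs, hys⟩ := hne
    rcases lt_or_eq_of_le hs with hlt | heq
    · exact absurd (h s hlt) hys
    · rwa [heq] at hys
  refine ⟨h0, hym, ?_, ?_⟩
  · intro hcx
    have h1 : y m = y 1 := by
      have := hcx (m - 1) (by omega)
      rwa [Nat.sub_add_cancel (by omega : 1 ≤ m)] at this
    exact hym (h1.trans (h 1 (by omega)))
  · have : wS m y = y m := by
      rw [wS, Finset.sum_eq_single m]
      · intro b hb hbm
        exact h b (by rw [mem_range] at hb; omega)
      · intro hnot; exact absurd (mem_range.mpr (by omega)) hnot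
    rw [this]; exact hym

lemma gPx (hm : 3 ≤ m) (hne : ∃ s, s ≤ m ∧ y s ≠ 0) (h : pZx m y) :
    y m = 0 ∧ y 0 ≠ 0 ∧ ¬pCe m y ∧ wS m y ≠ 0 := by
  have hz : ∀ s, 1 ≤ s → s ≤ m → y s = 0 := by
    intro s h1 h2
    have := h (s - 1) (by omega)
    rwa [Nat.sub_add_cancel h1] at this
  have hym : y m = 0 := hz m (by omega) le_rfl
  have hy0 : y 0 ≠ 0 := by
    obtain ⟨s, hs, hys⟩ := hne
    rcases Nat.eq_zero_or_pos s with h0 | h1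
    · rwa [h0] at hys
    · exact absurd (hz s h1 hs) hys
  refine ⟨hym, hy0, ?_, ?_⟩
  · intro hce
    have h1 := hce 1 (by omega)
    rw [hz 1 le_rfl (by omega)] at h1
    exact hy0 h1.symm
  · have : wS m y = y 0 := by
      rw [wS, Finset.sum_eq_single 0]
      · intro b hb hb0
        exact hz b (by omega) (by rw [mem_range] at hb; omega)
      · intro hnot; exact absurd (mem_range.mpr (by omega)) hnot
    rw [this]; exact hy0

lemma gQe (hm : 3 ≤ m) (hc : pCe m y) (h0 : y 0 ≠ 0) (hb : y m = 0) :
    ¬pCx m y ∧ wS m y ≠ 0 := by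
  have h1 : y 1 = y 0 := hc 1 (by omega)
  constructor
  · intro hcx
    have : y m = y 1 := by
      have := hcx (m - 1) (by omega)
      rwa [Nat.sub_add_cancel (by omega : 1 ≤ m)] at this
    rw [hb, h1] at this
    exact h0 this.symm
  · have : wS m y = (m : ℂ) * y 0 := by
      rw [wS, Finset.sum_range_succ, hb, add_zero]
      rw [Finset.sum_congr rfl (fun s hs => hc s (mem_range.mp hs))]
      rw [Finset.sum_const, card_range, nsmul_eq_mul]
    rw [this]
    exact mul_ne_zero (Nat.cast_ne_zero.mpr (by omega)) h0

lemma gQx (hm : 3 ≤ m) (hc : pCx m y) (hb : y m ≠ 0) (h0 : y 0 = 0) :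
    ¬pCe m y ∧ wS m y ≠ 0 := by
  have hm1 : y m = y 1 := by
    have := hc (m - 1) (by omega)
    rwa [Nat.sub_add_cancel (by omega : 1 ≤ m)] at this
  have h1 : y 1 ≠ 0 := hm1 ▸ hb
  constructor
  · intro hce
    exact h1 ((hce 1 (by omega)).trans h0)
  · have : wS m y = (m : ℂ) * y 1 := by
      rw [wS, Finset.sum_range_succ', h0, add_zero]
      rw [Finset.sum_congr rfl (fun s hs => hc s (mem_range.mp hs))]
      rw [Finset.sum_const, card_range, nsmul_eq_mul]
    rw [this]
    exact mul_ne_zero (Nat.cast_ne_zero.mpr (by omega)) h1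

lemma gRe (hm : 3 ≤ m) (hc : pCe m y) (hz : ¬pZe m y) : y 0 ≠ 0 ∧ ¬pZx m y := by
  have h0 : y 0 ≠ 0 := by
    intro h0
    exact hz (fun s hs => (hc s hs).trans h0)
  refine ⟨h0, fun hzx => ?_⟩
  have : y 1 = 0 := hzx 0 (by omega)
  rw [hc 1 (by omega)] at this
  exact h0 this

lemma gRx (hm : 3 ≤ m) (hc : pCx m y) (hz : ¬pZx m y) : y m ≠ 0 ∧ ¬pZe m y := by
  have h1 : y 1 ≠ 0 := by
    intro h1
    exact hz (fun s hs => (hc s hs).trans h1)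
  have hm1 : y m = y 1 := by
    have := hc (m - 1) (by omega)
    rwa [Nat.sub_add_cancel (by omega : 1 ≤ m)] at this
  refine ⟨hm1 ▸ h1, fun hze => h1 (hze 1 (by omega))⟩

lemma gT (hm : 3 ≤ m) (hce : pCe m y) (hcx : pCx m y) (h0 : y 0 ≠ 0) : wS m y ≠ 0 := by
  have h1 : y 1 = y 0 := hce 1 (by omega)
  have hall : ∀ s, s ≤ m → y s = y 0 := by
    intro s hs
    rcases Nat.eq_zero_or_pos s with h | h
    · rw [h]
    · have := hcx (s - 1) (by omega)
      rw [Nat.sub_add_cancel h] at this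
      rw [this, h1]
  have : wS m y = ((m + 1 : ℕ) : ℂ) * y 0 := by
    rw [wS, Finset.sum_congr rfl (fun s hs => hall s (by rw [mem_range] at hs; omega))]
    rw [Finset.sum_const, card_range, nsmul_eq_mul]
  rw [this]
  exact mul_ne_zero (Nat.cast_ne_zero.mpr (by omega)) h0

lemma gZCe' (hm : 3 ≤ m) (h : pZe m y) : pCe m y := fun s hs => by
  rw [h s hs, h 0 (by omega)]

lemma gZCx' (hm : 3 ≤ m) (h : pZx m y) : pCx m y := fun s hs => by
  rw [h s hs, h 0 (by omega)]

lemma gTm (hm : 3 ≤ m) (hce : pCe m y) (hcx : pCx m y) (hb : y m ≠ 0) : wS m y ≠ 0 := by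
  have hm1 : y m = y 1 := by
    have := hcx (m - 1) (by omega)
    rwa [Nat.sub_add_cancel (by omega : 1 ≤ m)] at this
  have h0 : y 0 ≠ 0 := by
    rw [← hce 1 (by omega), ← hm1]; exact hb
  exact gT hm hce hcx h0

lemma upb_tri (m : ℕ) (hm : 2 ≤ m) (A B : ℕ → ℂ) (c : ℂ)
    (h : ∀ i j, i < m → j < m → ¬(i = 0 ∧ j = 0) → A j * B i * c = 0) :
    c = 0 ∨ (∀ j, j < m → A j = 0) ∨ (∀ i, i < m → B i = 0) ∨
      ((∀ j, j < m → j ≠ 0 → A j = 0) ∧ (∀ i, i < m → i ≠ 0 → B i = 0)) := by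
  by_cases hc : c = 0
  · exact Or.inl hc
  by_cases hA : ∃ j, j < m ∧ j ≠ 0 ∧ A j ≠ 0
  · obtain ⟨j0, hj0, hj00, hAj0⟩ := hA
    refine Or.inr (Or.inr (Or.inl fun i hi => ?_))
    have := h i j0 hi hj0 (fun hp => hj00 hp.2)
    rcases mul_eq_zero.mp this with h' | h'
    · rcases mul_eq_zero.mp h' with h'' | h''
      · exact absurd h'' hAj0
      · exact h''
    · exact absurd h' hc
  push_neg at hA
  by_cases hB : ∃ i, i < m ∧ i ≠ 0 ∧ B i ≠ 0
  · obtain ⟨i0, hi0, hi00, hBi0⟩ := hB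
    refine Or.inr (Or.inl fun j hj => ?_)
    rcases Nat.eq_zero_or_pos j with hj0 | hj0
    · subst hj0
      have := h i0 0 hi0 (by omega) (fun hp => hi00 hp.1)
      rcases mul_eq_zero.mp this with h' | h'
      · rcases mul_eq_zero.mp h' with h'' | h''
        · exact h''
        · exact absurd h'' hBi0
      · exact absurd h' hc
    · exact hA j hj (by omega)
  push_neg at hB
  exact Or.inr (Or.inr (Or.inr ⟨hA, hB⟩))

/-- the abstract core combinatorial lemma -/
lemma upb_core
    (Ze1 Ce1 Zx1 Cx1 Ze2 Ce2 Zx2 Cx2 Ze3 Ce3 Zx3 Cx3 : Prop)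
    (a1 b1 S1 a2 b2 S2 a3 b3 S3 : ℂ)
    (hPe1 : Ze1 → a1 = 0 ∧ b1 ≠ 0 ∧ ¬Cx1 ∧ S1 ≠ 0)
    (hPe2 : Ze2 → a2 = 0 ∧ b2 ≠ 0 ∧ ¬Cx2 ∧ S2 ≠ 0)
    (hPe3 : Ze3 → a3 = 0 ∧ b3 ≠ 0 ∧ ¬Cx3 ∧ S3 ≠ 0)
    (hPx1 : Zx1 → b1 = 0 ∧ a1 ≠ 0 ∧ ¬Ce1 ∧ S1 ≠ 0)
    (hPx2 : Zx2 → b2 = 0 ∧ a2 ≠ 0 ∧ ¬Ce2 ∧ S2 ≠ 0)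
    (hPx3 : Zx3 → b3 = 0 ∧ a3 ≠ 0 ∧ ¬Ce3 ∧ S3 ≠ 0)
    (hQe1 : Ce1 → a1 ≠ 0 → b1 = 0 → ¬Cx1 ∧ S1 ≠ 0)
    (hQe2 : Ce2 → a2 ≠ 0 → b2 = 0 → ¬Cx2 ∧ S2 ≠ 0)
    (hQe3 : Ce3 → a3 ≠ 0 → b3 = 0 → ¬Cx3 ∧ S3 ≠ 0)
    (hQx1 : Cx1 → b1 ≠ 0 → a1 = 0 → ¬Ce1 ∧ S1 ≠ 0)
    (hQx2 : Cx2 → b2 ≠ 0 → a2 = 0 → ¬Ce2 ∧ S2 ≠ 0)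
    (hQx3 : Cx3 → b3 ≠ 0 → a3 = 0 → ¬Ce3 ∧ S3 ≠ 0)
    (hRe1 : Ce1 → ¬Ze1 → a1 ≠ 0 ∧ ¬Zx1)
    (hRe2 : Ce2 → ¬Ze2 → a2 ≠ 0 ∧ ¬Zx2)
    (hRe3 : Ce3 → ¬Ze3 → a3 ≠ 0 ∧ ¬Zx3)
    (hRx1 : Cx1 → ¬Zx1 → b1 ≠ 0 ∧ ¬Ze1)
    (hRx2 : Cx2 → ¬Zx2 → b2 ≠ 0 ∧ ¬Ze2)
    (hRx3 : Cx3 → ¬Zx3 → b3 ≠ 0 ∧ ¬Ze3)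
    (hT1 : Ce1 → Cx1 → a1 ≠ 0 → S1 ≠ 0)
    (hT2 : Ce2 → Cx2 → a2 ≠ 0 → S2 ≠ 0)
    (hT3 : Ce3 → Cx3 → a3 ≠ 0 → S3 ≠ 0)
    (hZCe1 : Ze1 → Ce1) (hZCe2 : Ze2 → Ce2) (hZCe3 : Ze3 → Ce3)
    (hZCx1 : Zx1 → Cx1) (hZCx2 : Zx2 → Cx2) (hZCx3 : Zx3 → Cx3)
    (hA1 : a2 = 0 ∨ Zx1 ∨ Ze3 ∨ (Cx1 ∧ Ce3))
    (hA2 : b3 = 0 ∨ Zx1 ∨ Ze2 ∨ (Cx1 ∧ Ce2))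
    (hA3 : b1 = 0 ∨ Zx2 ∨ Ze3 ∨ (Cx2 ∧ Ce3))
    (hB1 : b2 = 0 ∨ Ze1 ∨ Zx3 ∨ (Ce1 ∧ Cx3))
    (hB2 : a3 = 0 ∨ Ze1 ∨ Zx2 ∨ (Ce1 ∧ Cx2))
    (hB3 : a1 = 0 ∨ Ze2 ∨ Zx3 ∨ (Ce2 ∧ Cx3))
    (hS : S1 * S2 * S3 = 0) :
    a1 = 0 := by
  by_contra ha
  have hZe1' : ¬Ze1 := fun h => ha (hPe1 h).1
  -- case 1 : Ze2
  have case1 : Ze2 → False := by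
    intro h
    obtain ⟨ha2, hb2, hnCx2, hS2⟩ := hPe2 h
    have hCe2 : Ce2 := hZCe2 h
    have hnZx2 : ¬Zx2 := fun hz => hnCx2 (hZCx2 hz)
    by_cases hzx3 : Zx3
    · obtain ⟨hb3, ha3, hnCe3, hS3⟩ := hPx3 hzx3
      rcases hB2 with h' | h' | h' | ⟨_, hCx2⟩
      · exact ha3 h'
      · exact hZe1' h'
      · exact hnZx2 h'
      · exact hnCx2 hCx2
    · rcases hB1 with h' | h' | h' | ⟨hCe1, hCx3⟩
      · exact hb2 h'
      · exact hZe1' h'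
      · exact hzx3 h'
      · obtain ⟨hb3ne, hnZe3⟩ := hRx3 hCx3 hzx3
        rcases hA3 with h3 | h3 | h3 | ⟨hCx2, _⟩
        · obtain ⟨hnCx1, hS1⟩ := hQe1 hCe1 ha h3
          have hnZx1 : ¬Zx1 := fun hz => hnCx1 (hZCx1 hz)
          rcases hB2 with h4 | h4 | h4 | ⟨_, hCx2⟩
          · obtain ⟨_, hS3⟩ := hQx3 hCx3 hb3ne h4
            exact (mul_ne_zero (mul_ne_zero hS1 hS2) hS3) hS
          · exact hZe1' h4
          · exact hnZx2 h4
          · exact hnCx2 hCx2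
        · exact hnZx2 h3
        · exact hnZe3 h3
        · exact hnCx2 hCx2
  -- case 2 : Zx3
  have case2 : Zx3 → False := by
    intro h
    obtain ⟨hb3, ha3, hnCe3, hS3⟩ := hPx3 h
    have hCx3 : Cx3 := hZCx3 h
    have hnZe3 : ¬Ze3 := fun hz => hnCe3 (hZCe3 hz)
    have sub : Zx2 → False := by
      intro hzx2
      obtain ⟨hb2, ha2, hnCe2, hS2⟩ := hPx2 hzx2
      rcases hA1 with h'' | h'' | h'' | ⟨hCx1, hCe3⟩
      · exact ha2 h''
      · have hS1 := (hPx1 h'').2.2.2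
        exact (mul_ne_zero (mul_ne_zero hS1 hS2) hS3) hS
      · exact hnZe3 h''
      · exact hnCe3 hCe3
    rcases hB2 with h' | h' | h' | ⟨hCe1, hCx2⟩
    · exact ha3 h'
    · exact hZe1' h'
    · exact sub h'
    · by_cases hzx2 : Zx2
      · exact sub hzx2
      · obtain ⟨hb2ne, hnZe2⟩ := hRx2 hCx2 hzx2
        rcases hA3 with h3 | h3 | h3 | ⟨_, hCe3⟩
        · obtain ⟨hnCx1, hS1⟩ := hQe1 hCe1 ha h3
          have hnZx1 : ¬Zx1 := fun hz => hnCx1 (hZCx1 hz)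
          rcases hA1 with h4 | h4 | h4 | ⟨hCx1, _⟩
          · obtain ⟨_, hS2⟩ := hQx2 hCx2 hb2ne h4
            exact (mul_ne_zero (mul_ne_zero hS1 hS2) hS3) hS
          · exact hnZx1 h4
          · exact hnZe3 h4
          · exact hnCx1 hCx1
        · exact hzx2 h3
        · exact hnZe3 h3
        · exact hnCe3 hCe3
  rcases hB3 with h | h | h | ⟨hCe2, hCx3⟩
  · exact ha h
  · exact case1 h
  · exact case2 h
  · by_cases hze2 : Ze2
    · exact case1 hze2
    by_cases hzx3 : Zx3
    · exact case2 hzx3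
    obtain ⟨ha2ne, hnZx2⟩ := hRe2 hCe2 hze2
    obtain ⟨hb3ne, hnZe3⟩ := hRx3 hCx3 hzx3
    rcases hA1 with h | h | h | ⟨hCx1, hCe3⟩
    · exact ha2ne h
    · -- Zx1
      obtain ⟨hb1, ha1ne, hnCe1, hS1⟩ := hPx1 h
      rcases hB1 with h' | h' | h' | ⟨hCe1, _⟩
      · -- b2 = 0
        obtain ⟨hnCx2, hS2⟩ := hQe2 hCe2 ha2ne h'
        rcases hB2 with h'' | h'' | h'' | ⟨hCe1, _⟩
        · obtain ⟨_, hS3⟩ := hQx3 hCx3 hb3ne h''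
          exact (mul_ne_zero (mul_ne_zero hS1 hS2) hS3) hS
        · exact hZe1' h''
        · exact hnZx2 h''
        · exact hnCe1 hCe1
      · exact hZe1' h'
      · exact hzx3 h'
      · exact hnCe1 hCe1
    · exact hnZe3 h
    · -- Cx1 ∧ Ce3
      have ha3ne := (hRe3 hCe3 hnZe3).1
      rcases hB2 with h' | h' | h' | ⟨hCe1, hCx2⟩
      · exact ha3ne h'
      · exact hZe1' h'
      · exact hnZx2 h'
      · have hS1 := hT1 hCe1 hCx1 ha
        have hS2 := hT2 hCe2 hCx2 ha2ne
        have hS3 := hT3 hCe3 hCx3 ha3ne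
        exact (mul_ne_zero (mul_ne_zero hS1 hS2) hS3) hS


def extd (d : ℕ) (x : Fin d → ℂ) (t : ℕ) : ℂ := if h : t < d then x ⟨t, h⟩ else 0

def ip (d : ℕ) (x y : Fin d → ℂ) : ℂ := ∑ i, (starRingEnd ℂ) (x i) * y i

lemma sum3_factor (d : ℕ) (f g h : Fin d → ℂ) :
    (∑ i, f i) * (∑ j, g j) * (∑ k, h k)
      = ∑ p : Fin d × Fin d × Fin d, f p.1 * g p.2.1 * h p.2.2 := by
  rw [Fintype.sum_prod_type, Finset.sum_mul, Finset.sum_mul]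
  refine Finset.sum_congr rfl fun i _ => ?_
  rw [Fintype.sum_prod_type, mul_assoc, Finset.sum_mul_sum, Finset.mul_sum]
  refine Finset.sum_congr rfl fun j _ => ?_
  rw [Finset.mul_sum]
  exact Finset.sum_congr rfl fun k _ => by ring

lemma ip_factor (d : ℕ) (a b c u v w : Fin d → ℂ) :
    inpD d (tpv d a b c) (tpv d u v w) = ip d a u * ip d b v * ip d c w := by
  rw [ip, ip, ip, sum3_factor, inpD]
  refine Finset.sum_congr rfl fun p _ => ?_
  simp only [tpv, map_mul]
  ring

lemma ip_eV (d t : ℕ) (ht : t < d) (x : Fin d → ℂ) : ip d (eV d t) x = extd d x t := by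
  rw [ip, extd, dif_pos ht, Finset.sum_eq_single (⟨t, ht⟩ : Fin d)]
  · simp [eV]
  · intro b _ hb
    have : (b : ℕ) ≠ t := fun hc => hb (Fin.ext hc)
    simp [eV, this]
  · intro hn; exact absurd (mem_univ _) hn

lemma ip_sum_basis (d : ℕ) (co : ℕ → ℂ) (idx : ℕ → ℕ) (S : Finset ℕ)
    (hS : ∀ t ∈ S, idx t < d) (x : Fin d → ℂ) :
    ip d (fun a => ∑ t ∈ S, co t * eV d (idx t) a) x
      = ∑ t ∈ S, (starRingEnd ℂ) (co t) * extd d x (idx t) := by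
  rw [ip]
  have key : ∀ i : Fin d, (starRingEnd ℂ) (∑ t ∈ S, co t * eV d (idx t) i) * x i
      = ∑ t ∈ S, (starRingEnd ℂ) (co t) * ((starRingEnd ℂ) (eV d (idx t) i) * x i) := by
    intro i
    rw [map_sum, Finset.sum_mul]
    exact Finset.sum_congr rfl fun t _ => by rw [map_mul]; ring
  rw [Finset.sum_congr rfl fun i _ => key i, Finset.sum_comm]
  refine Finset.sum_congr rfl fun t ht => ?_
  rw [← Finset.mul_sum]
  congr 1
  exact ip_eV d (idx t) (hS t ht) x

lemma ip_eta (d k i : ℕ) (h2 : 2 * k + 4 ≤ d) (x : Fin d → ℂ) :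
    ip d (etaG d k i) x
      = ∑ s ∈ range (d - 1 - 2 * k),
          ((starRingEnd ℂ) (wN (d - 1 - 2 * k))) ^ (i * s) * extd d x (k + s) := by
  have heq : etaG d k i = fun a => ∑ t ∈ Finset.Icc k (d - 2 - k),
      (fun t => wN (d - 1 - 2 * k) ^ (i * (t - k))) t * eV d (id t) a := rfl
  rw [heq, ip_sum_basis d _ id _ (fun t ht => by rw [mem_Icc] at ht; simp; omega) x]
  rw [← Finset.Ico_add_one_right_eq_Icc, Finset.sum_Ico_eq_sum_range]
  have hm : d - 2 - k + 1 - k = d - 1 - 2 * k := by omega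
  rw [hm]
  refine Finset.sum_congr rfl fun s _ => ?_
  simp only [map_pow, Nat.add_sub_cancel_left, id_eq]

lemma ip_xi (d k j : ℕ) (h2 : 2 * k + 4 ≤ d) (x : Fin d → ℂ) :
    ip d (xiG d k j) x
      = ∑ s ∈ range (d - 1 - 2 * k),
          ((starRingEnd ℂ) (wN (d - 1 - 2 * k))) ^ (j * s) * extd d x (k + 1 + s) := by
  have heq : xiG d k j = fun a => ∑ t ∈ Finset.Icc k (d - 2 - k),
      (fun t => wN (d - 1 - 2 * k) ^ (j * (t - k))) t * eV d (t + 1) a := rfl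
  rw [heq, ip_sum_basis d _ (fun t => t + 1) _ (fun t ht => by rw [mem_Icc] at ht; show t + 1 < d; omega) x]
  rw [← Finset.Ico_add_one_right_eq_Icc, Finset.sum_Ico_eq_sum_range]
  have hm : d - 2 - k + 1 - k = d - 1 - 2 * k := by omega
  rw [hm]
  refine Finset.sum_congr rfl fun s _ => ?_
  simp only [map_pow, Nat.add_sub_cancel_left]
  have hidx : k + s + 1 = k + 1 + s := by omega
  rw [hidx]

lemma ip_ones (d : ℕ) (x : Fin d → ℂ) :
    ip d (fun a => ∑ t ∈ range d, eV d t a) x = ∑ t ∈ range d, extd d x t := by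
  have heq : (fun a => ∑ t ∈ range d, eV d t a)
      = fun a => ∑ t ∈ range d, (fun _ => (1:ℂ)) t * eV d (id t) a := by
    funext a
    exact Finset.sum_congr rfl fun t _ => by simp
  rw [heq, ip_sum_basis d _ id _ (fun t ht => by simpa using mem_range.mp ht) x]
  exact Finset.sum_congr rfl fun t _ => by simp

lemma ip_phi (d r : ℕ) (hd : 4 ≤ d) (x : Fin d → ℂ) :
    ip d (phiE d r) x
      = extd d x ((d - 2) / 2) + (-1 : ℂ) ^ r * extd d x (d / 2) := by
  have heq : phiE d r = fun a => eV d ((d-2)/2) a + (-1:ℂ)^r * eV d (d/2) a := rfl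
  rw [heq, ip]
  have key : ∀ i : Fin d, (starRingEnd ℂ) (eV d ((d-2)/2) i + (-1:ℂ)^r * eV d (d/2) i) * x i
      = (starRingEnd ℂ) (eV d ((d-2)/2) i) * x i
        + (-1:ℂ)^r * ((starRingEnd ℂ) (eV d (d/2) i) * x i) := by
    intro i
    rw [map_add, map_mul, map_pow, map_neg, map_one, add_mul]
    ring
  rw [Finset.sum_congr rfl fun i _ => key i, Finset.sum_add_distrib, ← Finset.mul_sum]
  rw [show (∑ i, (starRingEnd ℂ) (eV d ((d-2)/2) i) * x i) = ip d (eV d ((d-2)/2)) x from rfl]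
  rw [show (∑ i, (starRingEnd ℂ) (eV d (d/2) i) * x i) = ip d (eV d (d/2)) x from rfl]
  rw [ip_eV d _ (by omega) x, ip_eV d _ (by omega) x]

lemma primroot_conj_wN (m : ℕ) (hm : m ≠ 0) :
    IsPrimitiveRoot ((starRingEnd ℂ) (wN m)) m := by
  have h1 := Complex.isPrimitiveRoot_exp m hm
  have hc : (starRingEnd ℂ) (wN m) = (wN m)⁻¹ := by
    rw [wN, ← Complex.exp_conj, ← Complex.exp_neg]
    congr 1
    rw [map_div₀, map_mul, map_mul, Complex.conj_I]
    simp [Complex.conj_ofReal]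
    ring_nf
    rw [show ((starRingEnd ℂ) 2) = (2 : ℂ) from map_ofNat _ 2]
    ring
  rw [hc]
  exact h1.inv


lemma convZe (d k : ℕ) (h2 : 2 * k + 4 ≤ d) (x : Fin d → ℂ)
    (hF : ∀ i, i < d - 1 - 2 * k → ip d (etaG d k i) x = 0) :
    pZe (d - 1 - 2 * k) (fun s => extd d x (k + s)) := by
  have hζ := primroot_conj_wN (d - 1 - 2 * k) (by omega)
  intro s hs
  refine upbF_zero _ (by omega) _ hζ (fun s => extd d x (k + s)) ?_ s hs
  intro i hi
  rw [← ip_eta d k i h2 x]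
  exact hF i hi

lemma convCe (d k : ℕ) (h2 : 2 * k + 4 ≤ d) (x : Fin d → ℂ)
    (hF : ∀ i, i < d - 1 - 2 * k → i ≠ 0 → ip d (etaG d k i) x = 0) :
    pCe (d - 1 - 2 * k) (fun s => extd d x (k + s)) := by
  have hζ := primroot_conj_wN (d - 1 - 2 * k) (by omega)
  intro s hs
  refine upbF_const _ (by omega) _ hζ (fun s => extd d x (k + s)) ?_ s hs
  intro i hi hi0
  rw [← ip_eta d k i h2 x]
  exact hF i hi hi0

lemma convZx (d k : ℕ) (h2 : 2 * k + 4 ≤ d) (x : Fin d → ℂ)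
    (hF : ∀ j, j < d - 1 - 2 * k → ip d (xiG d k j) x = 0) :
    pZx (d - 1 - 2 * k) (fun s => extd d x (k + s)) := by
  have hζ := primroot_conj_wN (d - 1 - 2 * k) (by omega)
  intro s hs
  have hz := upbF_zero _ (by omega : 0 < d - 1 - 2*k) _ hζ (fun s => extd d x (k + 1 + s))
    (fun j hj => by rw [← ip_xi d k j h2 x]; exact hF j hj) s hs
  show extd d x (k + (s + 1)) = 0
  rw [show k + (s + 1) = k + 1 + s by omega]
  exact hz

lemma convCx (d k : ℕ) (h2 : 2 * k + 4 ≤ d) (x : Fin d → ℂ)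
    (hF : ∀ j, j < d - 1 - 2 * k → j ≠ 0 → ip d (xiG d k j) x = 0) :
    pCx (d - 1 - 2 * k) (fun s => extd d x (k + s)) := by
  have hζ := primroot_conj_wN (d - 1 - 2 * k) (by omega)
  intro s hs
  have hz := upbF_const _ (by omega : 0 < d - 1 - 2*k) _ hζ (fun s => extd d x (k + 1 + s))
    (fun j hj hj0 => by rw [← ip_xi d k j h2 x]; exact hF j hj hj0) s hs
  show extd d x (k + (s + 1)) = extd d x (k + (0 + 1))
  rw [show k + (s + 1) = k + 1 + s by omega, show k + (0 + 1) = k + 1 + 0 by omega]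
  exact hz

lemma window_ne (d k : ℕ) (h2 : 2 * k + 4 ≤ d) (x : Fin d → ℂ) (hx : x ≠ 0)
    (hs : ∀ t, t < k ∨ d - 1 - k < t → extd d x t = 0) :
    ∃ s, s ≤ d - 1 - 2 * k ∧ extd d x (k + s) ≠ 0 := by
  have : ∃ i : Fin d, x i ≠ 0 := by
    by_contra hc
    push_neg at hc
    exact hx (funext fun i => hc i)
  obtain ⟨i, hi⟩ := this
  have hext : extd d x (i : ℕ) ≠ 0 := by
    rw [extd, dif_pos i.isLt]
    simpa using hi
  have hk : k ≤ (i : ℕ) ∧ (i : ℕ) ≤ d - 1 - k := by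
    by_contra hc
    push_neg at hc
    rcases Nat.lt_or_ge (i : ℕ) k with h' | h'
    · exact hext (hs _ (Or.inl h'))
    · exact hext (hs _ (Or.inr (hc h')))
  refine ⟨(i : ℕ) - k, by omega, ?_⟩
  rw [show k + ((i : ℕ) - k) = (i : ℕ) by omega]
  exact hext

lemma window_sum (d k : ℕ) (h2 : 2 * k + 4 ≤ d) (x : Fin d → ℂ)
    (hs : ∀ t, t < k ∨ d - 1 - k < t → extd d x t = 0) :
    ∑ t ∈ range d, extd d x t = wS (d - 1 - 2 * k) (fun s => extd d x (k + s)) := by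
  rw [wS]
  have h1 : ∑ s ∈ range (d - 1 - 2 * k + 1), extd d x (k + s)
      = ∑ t ∈ Finset.Ico k (d - k), extd d x t := by
    rw [Finset.sum_Ico_eq_sum_range]
    rw [show d - k - k = d - 1 - 2 * k + 1 by omega]
  rw [h1]
  refine (Finset.sum_subset ?_ ?_).symm
  · intro t ht
    rw [Finset.mem_Ico] at ht
    rw [mem_range]
    omega
  · intro t ht hnt
    rw [mem_range] at ht
    rw [Finset.mem_Ico] at hnt
    push_neg at hnt
    rcases Nat.lt_or_ge t k with h' | h'
    · exact hs t (Or.inl h')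
    · exact hs t (Or.inr (by have := hnt h'; omega))

set_option maxHeartbeats 2000000 in
lemma perk (d k : ℕ) (h2 : 2 * k + 4 ≤ d) (u v w : Fin d → ℂ)
    (hu : u ≠ 0) (hv : v ≠ 0) (hw : w ≠ 0)
    (hsu : ∀ t, t < k ∨ d - 1 - k < t → extd d u t = 0)
    (hsv : ∀ t, t < k ∨ d - 1 - k < t → extd d v t = 0)
    (hsw : ∀ t, t < k ∨ d - 1 - k < t → extd d w t = 0)
    (hA1 : ∀ i j, i < d - 1 - 2*k → j < d - 1 - 2*k → ¬(i = 0 ∧ j = 0) →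
      ip d (xiG d k j) u * ip d (eV d k) v * ip d (etaG d k i) w = 0)
    (hA2 : ∀ i j, i < d - 1 - 2*k → j < d - 1 - 2*k → ¬(i = 0 ∧ j = 0) →
      ip d (xiG d k j) u * ip d (etaG d k i) v * ip d (eV d (d - 1 - k)) w = 0)
    (hA3 : ∀ i j, i < d - 1 - 2*k → j < d - 1 - 2*k → ¬(i = 0 ∧ j = 0) →
      ip d (eV d (d - 1 - k)) u * ip d (xiG d k j) v * ip d (etaG d k i) w = 0)
    (hB1 : ∀ i j, i < d - 1 - 2*k → j < d - 1 - 2*k → ¬(i = 0 ∧ j = 0) →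
      ip d (etaG d k i) u * ip d (eV d (d - 1 - k)) v * ip d (xiG d k j) w = 0)
    (hB2 : ∀ i j, i < d - 1 - 2*k → j < d - 1 - 2*k → ¬(i = 0 ∧ j = 0) →
      ip d (etaG d k i) u * ip d (xiG d k j) v * ip d (eV d k) w = 0)
    (hB3 : ∀ i j, i < d - 1 - 2*k → j < d - 1 - 2*k → ¬(i = 0 ∧ j = 0) →
      ip d (eV d k) u * ip d (etaG d k i) v * ip d (xiG d k j) w = 0)
    (hstop : (∑ t ∈ range d, extd d u t) * (∑ t ∈ range d, extd d v t)
        * (∑ t ∈ range d, extd d w t) = 0) :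
    (extd d u k = 0 ∧ extd d u (d - 1 - k) = 0) ∧
    (extd d v k = 0 ∧ extd d v (d - 1 - k) = 0) ∧
    (extd d w k = 0 ∧ extd d w (d - 1 - k) = 0) := by
  have hm3 : 3 ≤ d - 1 - 2 * k := by omega
  have hkd : k < d := by omega
  have hkd' : d - 1 - k < d := by omega
  have hne1 := window_ne d k h2 u hu hsu
  have hne2 := window_ne d k h2 v hv hsv
  have hne3 := window_ne d k h2 w hw hsw
  have hstop' : wS (d - 1 - 2*k) (fun s => extd d u (k + s))
      * wS (d - 1 - 2*k) (fun s => extd d v (k + s))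
      * wS (d - 1 - 2*k) (fun s => extd d w (k + s)) = 0 := by
    rw [← window_sum d k h2 u hsu, ← window_sum d k h2 v hsv, ← window_sum d k h2 w hsw]
    exact hstop
  have hidx : k + (d - 1 - 2 * k) = d - 1 - k := by omega
  -- the six disjunctions
  have D1 : (fun s => extd d v (k + s)) 0 = 0
      ∨ pZx (d-1-2*k) (fun s => extd d u (k + s)) ∨ pZe (d-1-2*k) (fun s => extd d w (k + s))
      ∨ (pCx (d-1-2*k) (fun s => extd d u (k + s)) ∧ pCe (d-1-2*k) (fun s => extd d w (k + s))) := by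
    have := upb_tri (d-1-2*k) (by omega) (fun j => ip d (xiG d k j) u)
      (fun i => ip d (etaG d k i) w) (extd d v k)
      (fun i j hi hj hij => by
        have h' := hA1 i j hi hj hij
        rw [ip_eV d k hkd v] at h'
        linear_combination h')
    rcases this with h | h | h | ⟨h, h'⟩
    · exact Or.inl h
    · exact Or.inr (Or.inl (convZx d k h2 u h))
    · exact Or.inr (Or.inr (Or.inl (convZe d k h2 w h)))
    · exact Or.inr (Or.inr (Or.inr ⟨convCx d k h2 u h, convCe d k h2 w h'⟩))
  have D2 : (fun s => extd d w (k + s)) (d-1-2*k) = 0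
      ∨ pZx (d-1-2*k) (fun s => extd d u (k + s)) ∨ pZe (d-1-2*k) (fun s => extd d v (k + s))
      ∨ (pCx (d-1-2*k) (fun s => extd d u (k + s)) ∧ pCe (d-1-2*k) (fun s => extd d v (k + s))) := by
    have := upb_tri (d-1-2*k) (by omega) (fun j => ip d (xiG d k j) u)
      (fun i => ip d (etaG d k i) v) (extd d w (d - 1 - k))
      (fun i j hi hj hij => by
        have h' := hA2 i j hi hj hij
        rw [ip_eV d (d-1-k) hkd' w] at h'
        linear_combination h')
    rcases this with h | h | h | ⟨h, h'⟩
    · refine Or.inl ?_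
      show extd d w (k + (d-1-2*k)) = 0
      rw [hidx]; exact h
    · exact Or.inr (Or.inl (convZx d k h2 u h))
    · exact Or.inr (Or.inr (Or.inl (convZe d k h2 v h)))
    · exact Or.inr (Or.inr (Or.inr ⟨convCx d k h2 u h, convCe d k h2 v h'⟩))
  have D3 : (fun s => extd d u (k + s)) (d-1-2*k) = 0
      ∨ pZx (d-1-2*k) (fun s => extd d v (k + s)) ∨ pZe (d-1-2*k) (fun s => extd d w (k + s))
      ∨ (pCx (d-1-2*k) (fun s => extd d v (k + s)) ∧ pCe (d-1-2*k) (fun s => extd d w (k + s))) := by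
    have := upb_tri (d-1-2*k) (by omega) (fun j => ip d (xiG d k j) v)
      (fun i => ip d (etaG d k i) w) (extd d u (d - 1 - k))
      (fun i j hi hj hij => by
        have h' := hA3 i j hi hj hij
        rw [ip_eV d (d-1-k) hkd' u] at h'
        linear_combination h')
    rcases this with h | h | h | ⟨h, h'⟩
    · refine Or.inl ?_
      show extd d u (k + (d-1-2*k)) = 0
      rw [hidx]; exact h
    · exact Or.inr (Or.inl (convZx d k h2 v h))
    · exact Or.inr (Or.inr (Or.inl (convZe d k h2 w h)))
    · exact Or.inr (Or.inr (Or.inr ⟨convCx d k h2 v h, convCe d k h2 w h'⟩))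
  have D4 : (fun s => extd d v (k + s)) (d-1-2*k) = 0
      ∨ pZe (d-1-2*k) (fun s => extd d u (k + s)) ∨ pZx (d-1-2*k) (fun s => extd d w (k + s))
      ∨ (pCe (d-1-2*k) (fun s => extd d u (k + s)) ∧ pCx (d-1-2*k) (fun s => extd d w (k + s))) := by
    have := upb_tri (d-1-2*k) (by omega) (fun j => ip d (xiG d k j) w)
      (fun i => ip d (etaG d k i) u) (extd d v (d - 1 - k))
      (fun i j hi hj hij => by
        have h' := hB1 i j hi hj hij
        rw [ip_eV d (d-1-k) hkd' v] at h'
        linear_combination h')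
    rcases this with h | h | h | ⟨h, h'⟩
    · refine Or.inl ?_
      show extd d v (k + (d-1-2*k)) = 0
      rw [hidx]; exact h
    · exact Or.inr (Or.inr (Or.inl (convZx d k h2 w h)))
    · exact Or.inr (Or.inl (convZe d k h2 u h))
    · exact Or.inr (Or.inr (Or.inr ⟨convCe d k h2 u h', convCx d k h2 w h⟩))
  have D5 : (fun s => extd d w (k + s)) 0 = 0
      ∨ pZe (d-1-2*k) (fun s => extd d u (k + s)) ∨ pZx (d-1-2*k) (fun s => extd d v (k + s))
      ∨ (pCe (d-1-2*k) (fun s => extd d u (k + s)) ∧ pCx (d-1-2*k) (fun s => extd d v (k + s))) := by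
    have := upb_tri (d-1-2*k) (by omega) (fun j => ip d (xiG d k j) v)
      (fun i => ip d (etaG d k i) u) (extd d w k)
      (fun i j hi hj hij => by
        have h' := hB2 i j hi hj hij
        rw [ip_eV d k hkd w] at h'
        linear_combination h')
    rcases this with h | h | h | ⟨h, h'⟩
    · exact Or.inl h
    · exact Or.inr (Or.inr (Or.inl (convZx d k h2 v h)))
    · exact Or.inr (Or.inl (convZe d k h2 u h))
    · exact Or.inr (Or.inr (Or.inr ⟨convCe d k h2 u h', convCx d k h2 v h⟩))
  have D6 : (fun s => extd d u (k + s)) 0 = 0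
      ∨ pZe (d-1-2*k) (fun s => extd d v (k + s)) ∨ pZx (d-1-2*k) (fun s => extd d w (k + s))
      ∨ (pCe (d-1-2*k) (fun s => extd d v (k + s)) ∧ pCx (d-1-2*k) (fun s => extd d w (k + s))) := by
    have := upb_tri (d-1-2*k) (by omega) (fun j => ip d (xiG d k j) w)
      (fun i => ip d (etaG d k i) v) (extd d u k)
      (fun i j hi hj hij => by
        have h' := hB3 i j hi hj hij
        rw [ip_eV d k hkd u] at h'
        linear_combination h')
    rcases this with h | h | h | ⟨h, h'⟩
    · exact Or.inl h
    · exact Or.inr (Or.inr (Or.inl (convZx d k h2 w h)))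
    · exact Or.inr (Or.inl (convZe d k h2 v h))
    · exact Or.inr (Or.inr (Or.inr ⟨convCe d k h2 v h', convCx d k h2 w h⟩))
  -- the g-facts
  have P1e := gPe hm3 hne1
  have P2e := gPe hm3 hne2
  have P3e := gPe hm3 hne3
  have P1x := gPx hm3 hne1
  have P2x := gPx hm3 hne2
  have P3x := gPx hm3 hne3
  have Q1e := gQe (y := fun s => extd d u (k + s)) hm3
  have Q2e := gQe (y := fun s => extd d v (k + s)) hm3
  have Q3e := gQe (y := fun s => extd d w (k + s)) hm3
  have Q1x := gQx (y := fun s => extd d u (k + s)) hm3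
  have Q2x := gQx (y := fun s => extd d v (k + s)) hm3
  have Q3x := gQx (y := fun s => extd d w (k + s)) hm3
  have R1e := gRe (y := fun s => extd d u (k + s)) hm3
  have R2e := gRe (y := fun s => extd d v (k + s)) hm3
  have R3e := gRe (y := fun s => extd d w (k + s)) hm3
  have R1x := gRx (y := fun s => extd d u (k + s)) hm3
  have R2x := gRx (y := fun s => extd d v (k + s)) hm3
  have R3x := gRx (y := fun s => extd d w (k + s)) hm3
  have T1 := gT (y := fun s => extd d u (k + s)) hm3
  have T2 := gT (y := fun s => extd d v (k + s)) hm3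
  have T3 := gT (y := fun s => extd d w (k + s)) hm3
  have T1m : pCx (d-1-2*k) (fun s => extd d u (k + s)) → pCe (d-1-2*k) (fun s => extd d u (k + s))
      → (fun s => extd d u (k + s)) (d-1-2*k) ≠ 0 → wS (d-1-2*k) (fun s => extd d u (k + s)) ≠ 0 :=
    fun hcx hce hb => gTm hm3 hce hcx hb
  have T2m : pCx (d-1-2*k) (fun s => extd d v (k + s)) → pCe (d-1-2*k) (fun s => extd d v (k + s))
      → (fun s => extd d v (k + s)) (d-1-2*k) ≠ 0 → wS (d-1-2*k) (fun s => extd d v (k + s)) ≠ 0 :=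
    fun hcx hce hb => gTm hm3 hce hcx hb
  have T3m : pCx (d-1-2*k) (fun s => extd d w (k + s)) → pCe (d-1-2*k) (fun s => extd d w (k + s))
      → (fun s => extd d w (k + s)) (d-1-2*k) ≠ 0 → wS (d-1-2*k) (fun s => extd d w (k + s)) ≠ 0 :=
    fun hcx hce hb => gTm hm3 hce hcx hb
  have ZC1e := gZCe' (y := fun s => extd d u (k + s)) hm3
  have ZC2e := gZCe' (y := fun s => extd d v (k + s)) hm3
  have ZC3e := gZCe' (y := fun s => extd d w (k + s)) hm3
  have ZC1x := gZCx' (y := fun s => extd d u (k + s)) hm3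
  have ZC2x := gZCx' (y := fun s => extd d v (k + s)) hm3
  have ZC3x := gZCx' (y := fun s => extd d w (k + s)) hm3
  -- six applications of the core lemma
  have D1' := orswap D1
  have D2' := orswap D2
  have D3' := orswap D3
  have D4' := orswap D4
  have D5' := orswap D5
  have D6' := orswap D6
  have e1 : (fun s => extd d u (k + s)) 0 = 0 :=
    upb_core _ _ _ _ _ _ _ _ _ _ _ _ _ _ _ _ _ _ _ _ _
      P1e P2e P3e P1x P2x P3x Q1e Q2e Q3e Q1x Q2x Q3x R1e R2e R3e R1x R2x R3x
      T1 T2 T3 ZC1e ZC2e ZC3e ZC1x ZC2x ZC3x D1 D2 D3 D4 D5 D6 hstop'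
  have e2 : (fun s => extd d v (k + s)) 0 = 0 :=
    upb_core _ _ _ _ _ _ _ _ _ _ _ _ _ _ _ _ _ _ _ _ _
      P2e P3e P1e P2x P3x P1x Q2e Q3e Q1e Q2x Q3x Q1x R2e R3e R1e R2x R3x R1x
      T2 T3 T1 ZC2e ZC3e ZC1e ZC2x ZC3x ZC1x
      D5' D3 D4' D2' D6 D1' (by linear_combination hstop')
  have e3 : (fun s => extd d w (k + s)) 0 = 0 :=
    upb_core _ _ _ _ _ _ _ _ _ _ _ _ _ _ _ _ _ _ _ _ _
      P3e P1e P2e P3x P1x P2x Q3e Q1e Q2e Q3x Q1x Q2x R3e R1e R2e R3x R1x R2x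
      T3 T1 T2 ZC3e ZC1e ZC2e ZC3x ZC1x ZC2x
      D6' D4' D2 D3' D1' D5 (by linear_combination hstop')
  have f1 : (fun s => extd d u (k + s)) (d-1-2*k) = 0 :=
    upb_core _ _ _ _ _ _ _ _ _ _ _ _ _ _ _ _ _ _ _ _ _
      P1x P2x P3x P1e P2e P3e Q1x Q2x Q3x Q1e Q2e Q3e R1x R2x R3x R1e R2e R3e
      T1m T2m T3m ZC1x ZC2x ZC3x ZC1e ZC2e ZC3e
      D4 D5 D6 D1 D2 D3 hstop'
  have f2 : (fun s => extd d v (k + s)) (d-1-2*k) = 0 :=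
    upb_core _ _ _ _ _ _ _ _ _ _ _ _ _ _ _ _ _ _ _ _ _
      P2x P3x P1x P2e P3e P1e Q2x Q3x Q1x Q2e Q3e Q1e R2x R3x R1x R2e R3e R1e
      T2m T3m T1m ZC2x ZC3x ZC1x ZC2e ZC3e ZC1e
      D2' D6 D1' D5' D3 D4' (by linear_combination hstop')
  have f3 : (fun s => extd d w (k + s)) (d-1-2*k) = 0 :=
    upb_core _ _ _ _ _ _ _ _ _ _ _ _ _ _ _ _ _ _ _ _ _
      P3x P1x P2x P3e P1e P2e Q3x Q1x Q2x Q3e Q1e Q2e R3x R1x R2x R3e R1e R2e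
      T3m T1m T2m ZC3x ZC1x ZC2x ZC3e ZC1e ZC2e
      D3' D1' D5 D6' D4' D2 (by linear_combination hstop')
  refine ⟨⟨e1, ?_⟩, ⟨e2, ?_⟩, ⟨e3, ?_⟩⟩
  · rw [← hidx]; exact f1
  · rw [← hidx]; exact f2
  · rw [← hidx]; exact f3

lemma two_point_sum (d : ℕ) (hd : 4 ≤ d) (x : Fin d → ℂ)
    (hs : ∀ t, t ≠ (d - 2) / 2 → t ≠ d / 2 → extd d x t = 0) :
    ∑ t ∈ range d, extd d x t = extd d x ((d - 2) / 2) + extd d x (d / 2) := by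
  rw [← Finset.sum_pair (show (d - 2) / 2 ≠ d / 2 by omega)]
  refine (Finset.sum_subset ?_ ?_).symm
  · intro t ht
    rw [Finset.mem_insert, Finset.mem_singleton] at ht
    rw [mem_range]
    omega
  · intro t _ hnt
    rw [Finset.mem_insert, Finset.mem_singleton] at hnt
    push_neg at hnt
    exact hs t hnt.1 hnt.2

lemma two_point_zero (d : ℕ) (hd : 4 ≤ d) (x : Fin d → ℂ)
    (hs : ∀ t, t ≠ (d - 2) / 2 → t ≠ d / 2 → extd d x t = 0)
    (h0 : extd d x ((d - 2) / 2) + (-1 : ℂ) ^ 0 * extd d x (d / 2) = 0)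
    (h1 : extd d x ((d - 2) / 2) + (-1 : ℂ) ^ 1 * extd d x (d / 2) = 0) :
    x = 0 := by
  have ha : extd d x ((d - 2) / 2) = 0 := by
    simp only [pow_zero, pow_one, one_mul] at h0 h1
    linear_combination (h0 + h1) / 2
  have hb : extd d x (d / 2) = 0 := by
    simp only [pow_zero, pow_one, one_mul] at h0 h1
    linear_combination (h0 - h1) / 2
  funext i
  have hx : x i = extd d x (i : ℕ) := by
    rw [extd, dif_pos i.isLt]
  rw [hx]
  by_cases h' : (i : ℕ) = (d - 2) / 2
  · rw [h']; exact ha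
  by_cases h'' : (i : ℕ) = d / 2
  · rw [h'']; exact hb
  · exact hs _ h' h''

theorem Ueven_unextendible' (d : ℕ) (hd : 4 ≤ d) (heven : Even d)
    (u v w : Fin d → ℂ)
    (h : ∀ x ∈ Ueven d, inpD d x (tpv d u v w) = 0) :
    tpv d u v w = 0 := by
  by_cases hu : u = 0
  · funext p; simp [tpv, hu]
  by_cases hv : v = 0
  · funext p; simp [tpv, hv]
  by_cases hw : w = 0
  · funext p; simp [tpv, hw]
  exfalso
  obtain ⟨r, hr⟩ := heven
  -- the stopper equation
  have hstop : (∑ t ∈ range d, extd d u t) * (∑ t ∈ range d, extd d v t)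
      * (∑ t ∈ range d, extd d w t) = 0 := by
    have hm : stopD d ∈ Ueven d := Set.mem_union_right _ rfl
    have h' := h _ hm
    rw [stopD, ip_factor, ip_ones, ip_ones, ip_ones] at h'
    exact h'
  -- the inductive support claim
  have hsupp : ∀ k, 2 * k + 2 ≤ d →
      ((∀ t, t < k ∨ d - 1 - k < t → extd d u t = 0) ∧
       (∀ t, t < k ∨ d - 1 - k < t → extd d v t = 0) ∧
       (∀ t, t < k ∨ d - 1 - k < t → extd d w t = 0)) := by
    intro k
    induction k with
    | zero =>
      intro _
      refine ⟨?_, ?_, ?_⟩ <;>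
        · intro t ht
          rcases ht with h' | h'
          · exact absurd h' (by omega)
          · rw [extd, dif_neg (show ¬ t < d by omega)]
    | succ k ihk =>
      intro hk2
      have h2 : 2 * k + 4 ≤ d := by omega
      obtain ⟨Hu, Hv, Hw⟩ := ihk (by omega)
      have hk4 : k ≤ (d - 4) / 2 := by omega
      have memC : ∀ x, x ∈ Cset d k → x ∈ Ueven d := fun x hx =>
        Set.mem_union_left _ (Set.mem_union_left _ ⟨k, hk4, hx⟩)
      have res := perk d k h2 u v w hu hv hw Hu Hv Hw
        (fun i j hi hj hij => by
          have h' := h _ (memC _ ⟨i, j, hi, hj, hij, Or.inl rfl⟩)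
          rwa [ip_factor] at h')
        (fun i j hi hj hij => by
          have h' := h _ (memC _ ⟨i, j, hi, hj, hij, Or.inr (Or.inl rfl)⟩)
          rwa [ip_factor] at h')
        (fun i j hi hj hij => by
          have h' := h _ (memC _ ⟨i, j, hi, hj, hij, Or.inr (Or.inr (Or.inl rfl))⟩)
          rwa [ip_factor] at h')
        (fun i j hi hj hij => by
          have h' := h _ (memC _ ⟨i, j, hi, hj, hij, Or.inr (Or.inr (Or.inr (Or.inl rfl)))⟩)
          rwa [ip_factor] at h')
        (fun i j hi hj hij => by
          have h' := h _ (memC _ ⟨i, j, hi, hj, hij,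
            Or.inr (Or.inr (Or.inr (Or.inr (Or.inl rfl))))⟩)
          rwa [ip_factor] at h')
        (fun i j hi hj hij => by
          have h' := h _ (memC _ ⟨i, j, hi, hj, hij,
            Or.inr (Or.inr (Or.inr (Or.inr (Or.inr rfl))))⟩)
          rwa [ip_factor] at h')
        hstop
      obtain ⟨⟨hu1, hu2⟩, ⟨hv1, hv2⟩, ⟨hw1, hw2⟩⟩ := res
      refine ⟨?_, ?_, ?_⟩
      · intro t ht
        rcases ht with h' | h'
        · by_cases htk : t = k
          · subst htk; exact hu1
          · exact Hu t (Or.inl (by omega))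
        · by_cases htk : t = d - 1 - k
          · subst htk; exact hu2
          · exact Hu t (Or.inr (by omega))
      · intro t ht
        rcases ht with h' | h'
        · by_cases htk : t = k
          · subst htk; exact hv1
          · exact Hv t (Or.inl (by omega))
        · by_cases htk : t = d - 1 - k
          · subst htk; exact hv2
          · exact Hv t (Or.inr (by omega))
      · intro t ht
        rcases ht with h' | h'
        · by_cases htk : t = k
          · subst htk; exact hw1
          · exact Hw t (Or.inl (by omega))
        · by_cases htk : t = d - 1 - k
          · subst htk; exact hw2
          · exact Hw t (Or.inr (by omega))
  -- now everything is supported on the middle two coordinates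
  obtain ⟨Hu, Hv, Hw⟩ := hsupp ((d - 2) / 2) (by omega)
  have hmid : d - 1 - (d - 2) / 2 = d / 2 := by omega
  have hsu2 : ∀ t, t ≠ (d - 2) / 2 → t ≠ d / 2 → extd d u t = 0 := by
    intro t h1 h2'
    exact Hu t (by omega)
  have hsv2 : ∀ t, t ≠ (d - 2) / 2 → t ≠ d / 2 → extd d v t = 0 := by
    intro t h1 h2'
    exact Hv t (by omega)
  have hsw2 : ∀ t, t ≠ (d - 2) / 2 → t ≠ d / 2 → extd d w t = 0 := by
    intro t h1 h2'
    exact Hw t (by omega)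
  -- the A0 equations, for all (r,s,t) ∈ {0,1}³
  have hall : ∀ r' s' t', r' < 2 → s' < 2 → t' < 2 →
      (extd d u ((d-2)/2) + (-1:ℂ)^r' * extd d u (d/2))
        * (extd d v ((d-2)/2) + (-1:ℂ)^s' * extd d v (d/2))
        * (extd d w ((d-2)/2) + (-1:ℂ)^t' * extd d w (d/2)) = 0 := by
    intro r' s' t' hr' hs' ht'
    by_cases h0 : r' = 0 ∧ s' = 0 ∧ t' = 0
    · obtain ⟨e1, e2, e3⟩ := h0
      subst e1; subst e2; subst e3
      simp only [pow_zero, one_mul]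
      rw [← two_point_sum d hd u hsu2, ← two_point_sum d hd v hsv2,
        ← two_point_sum d hd w hsw2]
      exact hstop
    · have hm : tpv d (phiE d r') (phiE d s') (phiE d t') ∈ Ueven d :=
        Set.mem_union_left _ (Set.mem_union_right _ ⟨r', s', t', hr', hs', ht', h0, rfl⟩)
      have h' := h _ hm
      rwa [ip_factor, ip_phi d r' hd u, ip_phi d s' hd v, ip_phi d t' hd w] at h'
  -- endgame
  have key : ∀ x : Fin d → ℂ, x ≠ 0 →
      (∀ t, t ≠ (d - 2) / 2 → t ≠ d / 2 → extd d x t = 0) →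
      ¬((extd d x ((d-2)/2) + (-1:ℂ)^(0:ℕ) * extd d x (d/2)) = 0 ∧
        (extd d x ((d-2)/2) + (-1:ℂ)^(1:ℕ) * extd d x (d/2)) = 0) := by
    rintro x hx hs ⟨h0, h1⟩
    exact hx (two_point_zero d hd x hs h0 h1)
  have hPu := key u hu hsu2
  have hPv := key v hv hsv2
  have hPw := key w hw hsw2
  obtain ⟨r0, hr0, hru⟩ : ∃ r0, r0 < 2 ∧
      extd d u ((d-2)/2) + (-1:ℂ)^r0 * extd d u (d/2) ≠ 0 := by
    by_cases h0 : extd d u ((d-2)/2) + (-1:ℂ)^(0:ℕ) * extd d u (d/2) = 0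
    · by_cases h1 : extd d u ((d-2)/2) + (-1:ℂ)^(1:ℕ) * extd d u (d/2) = 0
      · exact absurd ⟨h0, h1⟩ hPu
      · exact ⟨1, by omega, h1⟩
    · exact ⟨0, by omega, h0⟩
  obtain ⟨s0, hs0, hsv'⟩ : ∃ s0, s0 < 2 ∧
      extd d v ((d-2)/2) + (-1:ℂ)^s0 * extd d v (d/2) ≠ 0 := by
    by_cases h0 : extd d v ((d-2)/2) + (-1:ℂ)^(0:ℕ) * extd d v (d/2) = 0
    · by_cases h1 : extd d v ((d-2)/2) + (-1:ℂ)^(1:ℕ) * extd d v (d/2) = 0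
      · exact absurd ⟨h0, h1⟩ hPv
      · exact ⟨1, by omega, h1⟩
    · exact ⟨0, by omega, h0⟩
  have hw0 : ∀ t', t' < 2 → extd d w ((d-2)/2) + (-1:ℂ)^t' * extd d w (d/2) = 0 := by
    intro t' ht'
    have := hall r0 s0 t' hr0 hs0 ht'
    rcases mul_eq_zero.mp this with h' | h'
    · rcases mul_eq_zero.mp h' with h'' | h''
      · exact absurd h'' hru
      · exact absurd h'' hsv'
    · exact h'
  exact hPw ⟨hw0 0 (by omega), hw0 1 (by omega)⟩

/-- For every even d ≥ 4, U_d^even is an unextendible product basis: any product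
vector orthogonal to every member of U_d^even is zero. -/
theorem Ueven_unextendible (d : ℕ) (hd : 4 ≤ d) (heven : Even d)
    (u v w : Fin d → ℂ)
    (h : ∀ x ∈ Ueven d, inpD d x (tpv d u v w) = 0) :
    tpv d u v w = 0 := by
  exact Ueven_unextendible' d hd heven u v w h
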